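/- Define, for each integer N ≥ 1, S(N) = (2/(N+2))·√(6/((N+1)(N+3)))·Σ_m m·sin(π m/(N+2)), where the sum runs over integers m with 1 ≤ m ≤ N+1 and m ≡ N+1 (mod 2). Then S(2) = 2/√5, and for every integer N ≥ 2 one has S(N) ≤ S(2). -/

import Mathlib

open Finset Filter

/-- The square-root fidelity between the optimal resource states of
probabilistic and deterministic qubit PBT with `N` ports:
`S(N) = (2/(N+2))·√(6/((N+1)(N+3)))·Σ_m m·sin(π m/(N+2))`,
the sum over integers `1 ≤ m ≤ N+1` with `m ≡ N+1 (mod 2)`. -/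
noncomputable def Sfid (N : ℕ) : ℝ :=
  (2 / ((N : ℝ) + 2)) * Real.sqrt (6 / (((N : ℝ) + 1) * ((N : ℝ) + 3))) *
    ∑ m ∈ (Finset.Icc 1 (N + 1)).filter (fun m => m % 2 = (N + 1) % 2),
      (m : ℝ) * Real.sin (Real.pi * m / ((N : ℝ) + 2))

open Real in
/-- The fundamental trigonometric identity:
`2 sin²θ · Σ m sin(mθ) = sin((N+2)θ)cosθ − (N+2)cos((N+2)θ)sinθ`,
the sum over `1 ≤ m ≤ N+1` with `m ≡ N+1 (mod 2)`. -/
lemma Sfid.trig_sum (θ : ℝ) : ∀ N : ℕ,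
    2 * sin θ ^ 2 * ∑ m ∈ (Finset.Icc 1 (N + 1)).filter (fun m => m % 2 = (N + 1) % 2),
      (m : ℝ) * sin (m * θ)
    = sin (((N : ℝ) + 2) * θ) * cos θ - ((N : ℝ) + 2) * cos (((N : ℝ) + 2) * θ) * sin θ := by
  intro N
  induction N using Nat.twoStepInduction with
  | zero =>
      have hs : (Finset.Icc 1 (0 + 1)).filter (fun m => m % 2 = (0 + 1) % 2) = {1} := by decide
      rw [hs, Finset.sum_singleton]
      have h2 : ((0 : ℝ) + 2) * θ = θ + θ := by ring
      push_cast
      rw [h2]; simp only [sin_add, cos_add]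
      ring
  | one =>
      have hs : (Finset.Icc 1 (1 + 1)).filter (fun m => m % 2 = (1 + 1) % 2) = {2} := by decide
      rw [hs, Finset.sum_singleton]
      have h3 : ((1 : ℝ) + 2) * θ = (θ + θ) + θ := by ring
      have h2 : (2 : ℝ) * θ = θ + θ := by ring
      push_cast
      rw [h3, h2]; simp only [sin_add, cos_add]
      ring
  | more n ih _ =>
      have hset : (Finset.Icc 1 (n + 2 + 1)).filter (fun m => m % 2 = (n + 2 + 1) % 2)
          = insert (n + 3) ((Finset.Icc 1 (n + 1)).filter (fun m => m % 2 = (n + 1) % 2)) := by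
        ext m
        simp only [Finset.mem_filter, Finset.mem_Icc, Finset.mem_insert]
        omega
      have hnot : (n + 3) ∉ (Finset.Icc 1 (n + 1)).filter (fun m => m % 2 = (n + 1) % 2) := by
        simp only [Finset.mem_filter, Finset.mem_Icc]
        omega
      rw [hset, Finset.sum_insert hnot]
      have hx1 : ((n : ℝ) + 2 + 2) * θ = ((n : ℝ) + 3) * θ + θ := by ring
      have hx2 : ((n : ℝ) + 2) * θ = ((n : ℝ) + 3) * θ - θ := by ring
      rw [hx2, sin_sub, cos_sub] at ih
      push_cast
      rw [hx1, sin_add, cos_add]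
      linear_combination ih

/-- Closed form for the parity-restricted sine sum at `θ = π/(N+2)`. -/
lemma Sfid.sum_eq (N : ℕ) :
    ∑ m ∈ (Finset.Icc 1 (N + 1)).filter (fun m => m % 2 = (N + 1) % 2),
      (m : ℝ) * Real.sin (Real.pi * m / ((N : ℝ) + 2))
    = ((N : ℝ) + 2) / (2 * Real.sin (Real.pi / ((N : ℝ) + 2))) := by
  have hL : (0 : ℝ) < (N : ℝ) + 2 := by positivity
  set θ : ℝ := Real.pi / ((N : ℝ) + 2) with hθdef
  have hθpos : 0 < θ := by positivity
  have hθlt : θ < Real.pi := by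
    rw [hθdef, div_lt_iff₀ hL]
    nlinarith [Real.pi_pos]
  have hs : 0 < Real.sin θ := Real.sin_pos_of_pos_of_lt_pi hθpos hθlt
  have hrw : ∀ m ∈ (Finset.Icc 1 (N + 1)).filter (fun m => m % 2 = (N + 1) % 2),
      (m : ℝ) * Real.sin (Real.pi * m / ((N : ℝ) + 2)) = (m : ℝ) * Real.sin (m * θ) := by
    intro m _
    congr 2
    rw [hθdef]
    field_simp
  rw [Finset.sum_congr rfl hrw]
  have h := Sfid.trig_sum θ N
  have hπ : ((N : ℝ) + 2) * θ = Real.pi := by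
    rw [hθdef]; field_simp
  rw [hπ, Real.sin_pi, Real.cos_pi] at h
  have h2 : 2 * Real.sin θ ^ 2 *
      (∑ m ∈ (Finset.Icc 1 (N + 1)).filter (fun m => m % 2 = (N + 1) % 2),
        (m : ℝ) * Real.sin (m * θ)) = ((N : ℝ) + 2) * Real.sin θ := by
    linarith [h]
  field_simp
  nlinarith [h2, hs]

/-- `S(N) = √(6/((N+1)(N+3)))/sin(π/(N+2))`. -/
lemma Sfid.closed_form (N : ℕ) :
    Sfid N
    = Real.sqrt (6 / (((N : ℝ) + 1) * ((N : ℝ) + 3))) / Real.sin (Real.pi / ((N : ℝ) + 2)) := by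
  rw [Sfid, Sfid.sum_eq]
  have hL : ((N : ℝ) + 2) ≠ 0 := by positivity
  have hθpos : 0 < Real.pi / ((N : ℝ) + 2) := by positivity
  have hθlt : Real.pi / ((N : ℝ) + 2) < Real.pi := by
    rw [div_lt_iff₀ (by positivity)]
    nlinarith [Real.pi_pos]
  have hs : Real.sin (Real.pi / ((N : ℝ) + 2)) ≠ 0 :=
    ne_of_gt (Real.sin_pos_of_pos_of_lt_pi hθpos hθlt)
  field_simp

/-- The numerical core inequality: for `L ≥ 5`, `θ·L = π`, and `s > θ − θ³/4`,
one has `4(L²−1)s² ≥ 30`. -/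
lemma Sfid.key_ineq (L θ s : ℝ) (hL5 : 5 ≤ L) (hθL : θ * L = Real.pi)
    (hθpos : 0 < θ) (hsin : θ - θ ^ 3 / 4 < s) :
    30 ≤ 4 * ((L ^ 2 - 1) * s ^ 2) := by
  have hπu : Real.pi < 3.15 := Real.pi_lt_d2
  have hπl : 3.141592 < Real.pi := Real.pi_gt_d6
  have hLpos : (0 : ℝ) < L := by linarith
  have hθle : θ ≤ 0.63 := by nlinarith
  have hθsq : θ ^ 2 ≤ 0.3969 := by nlinarith
  have hθ3 : θ ^ 3 ≤ 0.3969 * θ := by nlinarith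
  have h9 : (9 / 10) * θ ≤ s := by nlinarith
  have hspos : 0 < s := by nlinarith
  have hπ2 : (9.8696 : ℝ) ≤ Real.pi ^ 2 := by nlinarith
  have hθL2 : θ ^ 2 * L ^ 2 = Real.pi ^ 2 := by nlinarith
  have hL2 : (24 / 25) * L ^ 2 ≤ L ^ 2 - 1 := by nlinarith
  have hs2' : (9 / 10 * θ) * (9 / 10 * θ) ≤ s * s :=
    mul_le_mul h9 h9 (by positivity) hspos.le
  have hs2 : (81 / 100) * θ ^ 2 ≤ s ^ 2 := by nlinarith [hs2']
  have hA : (24 / 25) * L ^ 2 * ((81 / 100) * θ ^ 2) ≤ (L ^ 2 - 1) * s ^ 2 :=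
    mul_le_mul hL2 hs2 (by positivity) (by nlinarith)
  nlinarith [hA, hπ2, hθL2]

/-- The main bound for `N ≥ 3`. -/
lemma Sfid.bound (N : ℕ) (hN : 3 ≤ N) :
    Real.sqrt (6 / (((N : ℝ) + 1) * ((N : ℝ) + 3))) / Real.sin (Real.pi / ((N : ℝ) + 2))
      ≤ 2 / Real.sqrt 5 := by
  have hL5 : (5 : ℝ) ≤ (N : ℝ) + 2 := by
    have : (3 : ℝ) ≤ (N : ℝ) := by exact_mod_cast hN
    linarith
  have hLpos : (0 : ℝ) < (N : ℝ) + 2 := by linarith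
  have hθpos : 0 < Real.pi / ((N : ℝ) + 2) := by positivity
  have hθL : (Real.pi / ((N : ℝ) + 2)) * ((N : ℝ) + 2) = Real.pi := by field_simp
  have hθ1 : Real.pi / ((N : ℝ) + 2) ≤ 1 := by
    rw [div_le_one hLpos]
    nlinarith [Real.pi_lt_d2]
  have hsin : Real.pi / ((N : ℝ) + 2) - (Real.pi / ((N : ℝ) + 2)) ^ 3 / 4 < Real.sin (Real.pi / ((N : ℝ) + 2)) := by
    have := Real.sin_gt_sub_cube hθpos
    linarith [pow_pos hθpos 3]
  have key := Sfid.key_ineq ((N : ℝ) + 2) (Real.pi / ((N : ℝ) + 2))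
    (Real.sin (Real.pi / ((N : ℝ) + 2))) hL5 hθL hθpos hsin
  set s : ℝ := Real.sin (Real.pi / ((N : ℝ) + 2)) with hsdef
  clear_value s
  have hspos : 0 < s := by
    rw [hsdef]
    exact Real.sin_pos_of_pos_of_lt_pi hθpos
      (lt_of_le_of_lt hθ1 (by nlinarith [Real.pi_gt_d6]))
  have hP : ((N : ℝ) + 1) * ((N : ℝ) + 3) = ((N : ℝ) + 2) ^ 2 - 1 := by ring
  have hPpos : (0 : ℝ) < ((N : ℝ) + 1) * ((N : ℝ) + 3) := by positivity
  have h5 : (0 : ℝ) < Real.sqrt 5 := by positivity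
  have hstep : 6 / (((N : ℝ) + 1) * ((N : ℝ) + 3)) ≤ (2 / Real.sqrt 5 * s) ^ 2 := by
    have hsq : (2 / Real.sqrt 5 * s) ^ 2 = (4 / 5) * s ^ 2 := by
      have h55 : Real.sqrt 5 ^ 2 = 5 := Real.sq_sqrt (by norm_num)
      field_simp
      nlinarith [h55]
    rw [hsq, div_le_iff₀ hPpos, hP]
    nlinarith [key]
  have hsqrt : Real.sqrt (6 / (((N : ℝ) + 1) * ((N : ℝ) + 3))) ≤ 2 / Real.sqrt 5 * s :=
    calc Real.sqrt (6 / (((N : ℝ) + 1) * ((N : ℝ) + 3)))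
        ≤ Real.sqrt ((2 / Real.sqrt 5 * s) ^ 2) := Real.sqrt_le_sqrt hstep
      _ = 2 / Real.sqrt 5 * s := Real.sqrt_sq (by positivity)
  rw [div_le_iff₀ hspos]
  exact hsqrt

/-- `S(2) = 2/√5`. -/
lemma Sfid.two : Sfid 2 = 2 / Real.sqrt 5 := by
  rw [Sfid.closed_form]
  have h4 : Real.pi / (((2 : ℕ) : ℝ) + 2) = Real.pi / 4 := by norm_num
  have h15 : (6 : ℝ) / ((((2 : ℕ) : ℝ) + 1) * (((2 : ℕ) : ℝ) + 3)) = 2 / 5 := by norm_num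
  rw [h4, h15, Real.sin_pi_div_four, Real.sqrt_div (by norm_num : (0:ℝ) ≤ 2) 5]
  have h2 : Real.sqrt 2 ≠ 0 := by positivity
  have h5 : Real.sqrt 5 ≠ 0 := by positivity
  field_simp

/-- `S(2) = 2/√5`, and `S(N) ≤ S(2)` for every `N ≥ 2`. -/
theorem Sfid_max_at_two :
    Sfid 2 = 2 / Real.sqrt 5 ∧ ∀ N : ℕ, 2 ≤ N → Sfid N ≤ Sfid 2 := by
  refine ⟨Sfid.two, fun N hN => ?_⟩
  rcases eq_or_lt_of_le hN with h | h
  · rw [← h]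
  · have h3 : 3 ≤ N := h
    rw [Sfid.two, Sfid.closed_form]
    exact Sfid.bound N h3
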